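/- arXiv:1806.07025 — 2 statements merged into one kernel-verified Lean document; each statement's English description precedes it below -/
import Mathlib

section
/- Under the hypotheses that X is a second-countable topological space and ⊕ : X → Y is a surjection admitting local continuous sections around every point (i.e., for every y ∈ Y there is an open neighborhood V and H : V → X with ⊕ ∘ H = id_V and H ∘ ⊕ continuous), the quotient topology on Y is second countable. -/
/-- If `X` is second countable and `op : X → Y` is a surjection
admitting local continuous sections around every point, then the quotient topology
on `Y` is second countable. -/
theorem stmt_3 {X Y : Type*} [tX : TopologicalSpace X] [tY : TopologicalSpace Y]
    [SecondCountableTopology X]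
    (op : X → Y) (hop : Function.Surjective op)
    (htY : tY = TopologicalSpace.coinduced op tX)
    (hsec : ∀ y : Y, ∃ V : Set Y, IsOpen V ∧ y ∈ V ∧ ∃ H : Y → X,
      (∀ v ∈ V, op (H v) = v) ∧ ContinuousOn (fun x => H (op x)) (op ⁻¹' V)) :
    SecondCountableTopology Y := by
  have hcont : Continuous op := continuous_iff_coinduced_le.mpr htY.ge
  have hopen : ∀ s : Set Y, IsOpen (op ⁻¹' s) → IsOpen s := by
    intro s hs
    rw [htY]
    exact isOpen_coinduced.mpr hs
  choose V hVopen hmem H hHsec hHcont using hsec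
  -- each H y is continuous on V y
  have hHVcont : ∀ y, ContinuousOn (H y) (V y) := by
    intro y
    rw [continuousOn_iff']
    intro U hU
    set S := op ⁻¹' (V y) ∩ (fun x => H y (op x)) ⁻¹' U with hSdef
    have hSopen : IsOpen S :=
      (hHcont y).isOpen_inter_preimage ((hVopen y).preimage hcont) hU
    have hsat : op ⁻¹' (op '' S) = S := by
      apply Set.Subset.antisymm
      · rintro x ⟨x', ⟨hx'V, hx'U⟩, hx'⟩
        refine ⟨?_, ?_⟩
        · show op x ∈ V y; rw [← hx']; exact hx'V
        · show H y (op x) ∈ U; rw [← hx']; exact hx'U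
      · exact Set.subset_preimage_image op S
    refine ⟨op '' S, ?_, ?_⟩
    · exact hopen _ (by rw [hsat]; exact hSopen)
    · ext v
      constructor
      · rintro ⟨hvU, hvV⟩
        obtain ⟨x, hx⟩ := hop v
        refine ⟨⟨x, ⟨?_, ?_⟩, hx⟩, hvV⟩
        · show op x ∈ V y; rw [hx]; exact hvV
        · show H y (op x) ∈ U; rw [hx]; exact hvU
      · rintro ⟨⟨x, ⟨hxV, hxU⟩, hx⟩, hvV⟩
        refine ⟨?_, hvV⟩
        show H y v ∈ U; rw [← hx]; exact hxU
  -- each V y is second countable via the embedding H y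
  haveI hVsc : ∀ y, SecondCountableTopology (V y) := by
    intro y
    have hecont : Continuous fun v : V y => H y (v : Y) :=
      (hHVcont y).comp_continuous continuous_subtype_val fun v => v.2
    have hind : Topology.IsInducing fun v : V y => H y (v : Y) := by
      apply Topology.IsInducing.of_comp hecont hcont
      have : (op ∘ fun v : V y => H y (v : Y)) = fun v : V y => (v : Y) := by
        funext v; exact hHsec y v v.2
      rw [this]
      exact Topology.IsInducing.subtypeVal
    exact hind.secondCountableTopology
  -- countable subcover
  obtain ⟨T, hTc, hTU⟩ := TopologicalSpace.isOpen_iUnion_countable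
    (fun y => op ⁻¹' V y) (fun y => (hVopen y).preimage hcont)
  haveI : Countable T := hTc.to_subtype
  have hcover : ⋃ i : T, V (i : Y) = Set.univ := by
    apply Set.eq_univ_of_forall
    intro z
    obtain ⟨x, hx⟩ := hop z
    have hxmem : x ∈ ⋃ y, op ⁻¹' V y := Set.mem_iUnion.mpr ⟨z, by simp [hx, hmem z]⟩
    rw [← hTU] at hxmem
    obtain ⟨y, hyT, hxy⟩ := Set.mem_iUnion₂.mp hxmem
    exact Set.mem_iUnion.mpr ⟨⟨y, hyT⟩, hx ▸ hxy⟩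
  exact TopologicalSpace.secondCountableTopology_of_countable_cover
    (fun i : T => hVopen (i : Y)) hcover
end

section
/- Let X be second countable and metrizable, ⊕ : X → Y surjective admitting local continuous sections at every point, and assume in addition that the quotient topology T_⊕ on Y is regular in the sense that every point of an open set W has an open neighborhood L with closure contained in W. Then the quotient topology T_⊕ on Y is metrizable. -/
/-- If `X` is second countable and metrizable, `op : X → Y` is a
surjection admitting local continuous sections at every point, and the quotient
topology on `Y` is regular in the sense that every point of an open set `W` has an
open neighborhood `L` with `closure L ⊆ W`, then the quotient topology on `Y`
is metrizable. -/
theorem stmt_5 {X Y : Type*} [tX : TopologicalSpace X] [tY : TopologicalSpace Y]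
    [SecondCountableTopology X] [TopologicalSpace.MetrizableSpace X]
    (op : X → Y) (hop : Function.Surjective op)
    (htY : tY = TopologicalSpace.coinduced op tX)
    (hsec : ∀ y : Y, ∃ V : Set Y, IsOpen V ∧ y ∈ V ∧ ∃ H : Y → X,
      (∀ v ∈ V, op (H v) = v) ∧ ContinuousOn (fun x => H (op x)) (op ⁻¹' V))
    (hreg : ∀ W : Set Y, IsOpen W → ∀ z ∈ W, ∃ L : Set Y,
      IsOpen L ∧ z ∈ L ∧ closure L ⊆ W) :
    TopologicalSpace.MetrizableSpace Y := by
  have hop_cont : Continuous op := continuous_iff_coinduced_le.mpr htY.ge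
  have hiff : ∀ s : Set Y, IsOpen s ↔ IsOpen (op ⁻¹' s) := by
    intro s; rw [htY]; exact isOpen_coinduced
  choose V hVo hyV H hHsec hHcont using hsec
  -- key openness fact: for open `U ⊆ X`, the set `{v ∈ V y | H y v ∈ U}` is open in `Y`
  have hopen : ∀ y (U : Set X), IsOpen U → IsOpen {v ∈ V y | H y v ∈ U} := by
    intro y U hU
    rw [hiff]
    have heq : op ⁻¹' {v ∈ V y | H y v ∈ U}
        = (op ⁻¹' V y) ∩ (fun x => H y (op x)) ⁻¹' U := by
      ext x; simp [Set.mem_setOf_eq]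
    rw [heq]
    exact (hHcont y).isOpen_inter_preimage ((hVo y).preimage hop_cont) hU
  -- T0
  have hT0 : T0Space Y := by
    rw [t0Space_iff_exists_isOpen_xor'_mem]
    intro a b hab
    by_cases hbV : b ∈ V a
    · refine ⟨{v ∈ V a | H a v ∈ ({H a b}ᶜ : Set X)}, hopen a _ isOpen_compl_singleton, ?_⟩
      refine Or.inl ⟨⟨hyV a, ?_⟩, fun hb => hb.2 rfl⟩
      intro hmem
      apply hab
      rw [← hHsec a a (hyV a), ← hHsec a b hbV, hmem]
    · exact ⟨V a, hVo a, Or.inl ⟨hyV a, hbV⟩⟩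
  -- Regular
  have hRegular : RegularSpace Y := by
    refine RegularSpace.of_exists_mem_nhds_isClosed_subset fun a s hs => ?_
    obtain ⟨W, hWs, hWo, haW⟩ := mem_nhds_iff.mp hs
    obtain ⟨L, hLo, haL, hcl⟩ := hreg W hWo a haW
    exact ⟨closure L, Filter.mem_of_superset (hLo.mem_nhds haL) subset_closure,
      isClosed_closure, hcl.trans hWs⟩
  -- each `V y` is second countable: it embeds into `X` via `H y`
  have key : ∀ y, SecondCountableTopology (V y) := by
    intro y
    set g : V y → X := fun v => H y (v : Y) with hg
    have hval : (Subtype.val : V y → Y) = op ∘ g :=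
      funext fun v => (hHsec y v v.2).symm
    have hg_cont : Continuous g := by
      rw [continuous_def]
      intro U hU
      rw [isOpen_induced_iff]
      refine ⟨{v ∈ V y | H y v ∈ U}, hopen y U hU, ?_⟩
      ext v
      simp only [Set.mem_preimage, Set.mem_setOf_eq, Set.mem_sep_iff]
      exact ⟨fun h => h.2, fun h => ⟨v.2, h⟩⟩
    have hind : Topology.IsInducing g := by
      refine Topology.IsInducing.of_comp hg_cont hop_cont ?_
      rw [← hval]
      exact Topology.IsInducing.subtypeVal
    have hinj : Function.Injective g := by
      intro u v huv
      apply Subtype.ext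
      rw [← hHsec y u u.2, ← hHsec y v v.2]
      exact congrArg op huv
    exact (Topology.IsEmbedding.mk hind hinj).secondCountableTopology
  -- `Y` is Lindelöf as a continuous image of a second countable (hence Lindelöf) space
  haveI : LindelofSpace Y := by
    constructor
    have h := (isLindelof_univ (X := X)).image hop_cont
    rwa [Set.image_univ, Set.range_eq_univ.mpr hop] at h
  obtain ⟨r, hrc, hrcov⟩ := isLindelof_univ.elim_countable_subcover V hVo
    (fun z _ => Set.mem_iUnion.mpr ⟨z, hyV z⟩)
  haveI : Countable r := hrc.to_subtype
  haveI : SecondCountableTopology Y := by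
    haveI : ∀ i : r, SecondCountableTopology (V (i : Y)) := fun i => key i
    refine TopologicalSpace.secondCountableTopology_of_countable_cover (ι := r) (U := fun i : r => V (i : Y)) (fun i : r => hVo i) ?_
    rw [Set.iUnion_coe_set]
    exact Set.eq_univ_of_univ_subset hrcov
  haveI : T3Space Y := {}
  exact TopologicalSpace.metrizableSpace_of_t3_secondCountable Y
end
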